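/- If q > 1/2, 0 < r < 1, and 0 < μ ≤ 1, then every eigenvalue of the m×m system matrix A has strictly negative real part; hence the linear system ẋ = A x is asymptotically stable at the equilibrium 0. -/

import Mathlib

open Finset

/-- Treatment probability matrix entry `P(i,j)`. -/
noncomputable def Ptreat (m : ℕ) (q : ℝ) (i j : ℕ) : ℝ :=
  if i ≤ j then ((m - i).choose (j - i) : ℝ) * q ^ (j - i) * (1 - q) ^ (m - j) else 0

/-- Repair probability matrix entry `R(i,j)`. -/
noncomputable def Rrep (m : ℕ) (r : ℝ) (i j : ℕ) : ℝ :=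
  if i = m then (if j = m then 1 else 0)
  else if j ≤ i then (i.choose j : ℝ) * r ^ (i - j) * (1 - r) ^ j else 0

/-- One-day transition matrix `Π = P·R`. -/
noncomputable def Pimat (m : ℕ) (q r : ℝ) (i j : ℕ) : ℝ :=
  ∑ k ∈ Finset.range (m + 1), Ptreat m q i k * Rrep m r k j

/-- The `m × m` system matrix `A(q,r)` (0-based indices `i = t-1`). -/
noncomputable def Amat (m : ℕ) (q r μ : ℝ) : Matrix (Fin m) (Fin m) ℝ :=
  fun t k =>
    if t = k then
      (if (t : ℕ) = 0 then Pimat m q r 0 0 + μ * (1 - q) ^ m - 1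
       else Pimat m q r t t - 1)
    else Pimat m q r k t

open Matrix

lemma Ptreat_nonneg (m : ℕ) (q : ℝ) (hq0 : 0 ≤ q) (hq1 : q ≤ 1) (i j : ℕ) :
    0 ≤ Ptreat m q i j := by
  unfold Ptreat
  split
  · exact mul_nonneg (mul_nonneg (Nat.cast_nonneg _) (pow_nonneg hq0 _))
      (pow_nonneg (by linarith) _)
  · exact le_refl 0

lemma Rrep_nonneg (m : ℕ) (r : ℝ) (hr0 : 0 ≤ r) (hr1 : r ≤ 1) (i j : ℕ) :
    0 ≤ Rrep m r i j := by
  unfold Rrep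
  split
  · split <;> norm_num
  · split
    · exact mul_nonneg (mul_nonneg (Nat.cast_nonneg _) (pow_nonneg hr0 _))
        (pow_nonneg (by linarith) _)
    · exact le_refl 0

lemma Pimat_nonneg (m : ℕ) (q r : ℝ) (hq0 : 0 ≤ q) (hq1 : q ≤ 1)
    (hr0 : 0 ≤ r) (hr1 : r ≤ 1) (i j : ℕ) : 0 ≤ Pimat m q r i j :=
  Finset.sum_nonneg fun k _ =>
    mul_nonneg (Ptreat_nonneg m q hq0 hq1 i k) (Rrep_nonneg m r hr0 hr1 k j)

lemma Ptreat_rowsum (m : ℕ) (q : ℝ) (i : ℕ) (hi : i ≤ m) :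
    ∑ j ∈ range (m + 1), Ptreat m q i j = 1 := by
  have h1 : ∑ j ∈ Finset.Ico 0 i, Ptreat m q i j = 0 := by
    apply Finset.sum_eq_zero
    intro j hj
    rw [Finset.mem_Ico] at hj
    unfold Ptreat
    rw [if_neg (by omega)]
  have h2 : range (m + 1) = Finset.Ico 0 (m + 1) := by rw [Finset.range_eq_Ico]
  rw [h2, ← Finset.sum_Ico_consecutive _ (Nat.zero_le i) (by omega), h1, zero_add,
    Finset.sum_Ico_eq_sum_range]
  have h3 : ∀ s ∈ range (m + 1 - i), Ptreat m q i (i + s)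
      = q ^ s * (1 - q) ^ (m - i - s) * ((m - i).choose s : ℝ) := by
    intro s hs
    rw [Finset.mem_range] at hs
    unfold Ptreat
    rw [if_pos (by omega)]
    have : i + s - i = s := by omega
    rw [this]
    have : m - (i + s) = m - i - s := by omega
    rw [this]
    ring
  rw [Finset.sum_congr rfl h3]
  have := add_pow q (1 - q) (m - i)
  have hn : m - i + 1 = m + 1 - i := by omega
  rw [hn] at this
  rw [← this]
  norm_num

lemma Rrep_rowsum (m : ℕ) (r : ℝ) (i : ℕ) (hi : i ≤ m) :
    ∑ j ∈ range (m + 1), Rrep m r i j = 1 := by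
  rcases eq_or_lt_of_le hi with h | h
  · rw [Finset.sum_eq_single m]
    · unfold Rrep; rw [if_pos h, if_pos rfl]
    · intro j _ hj; unfold Rrep; rw [if_pos h, if_neg hj]
    · intro hmem; exact absurd (Finset.self_mem_range_succ m) hmem
  · have hne : i ≠ m := by omega
    rw [← Finset.sum_subset (Finset.range_subset_range.mpr (by omega : i + 1 ≤ m + 1))
      (by
        intro j _ hj
        rw [Finset.mem_range] at hj
        push_neg at hj
        unfold Rrep
        rw [if_neg hne, if_neg (by omega)])]
    have h3 : ∀ j ∈ range (i + 1), Rrep m r i j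
        = (1 - r) ^ j * r ^ (i - j) * (i.choose j : ℝ) := by
      intro j hj
      rw [Finset.mem_range] at hj
      unfold Rrep
      rw [if_neg hne, if_pos (by omega)]
      ring
    rw [Finset.sum_congr rfl h3, ← add_pow (1 - r) r i]
    norm_num

lemma Pimat_rowsum (m : ℕ) (q r : ℝ) (i : ℕ) (hi : i ≤ m) :
    ∑ k ∈ range (m + 1), Pimat m q r i k = 1 := by
  unfold Pimat
  rw [Finset.sum_comm]
  have h : ∀ j ∈ range (m + 1),
      ∑ k ∈ range (m + 1), Ptreat m q i j * Rrep m r j k = Ptreat m q i j := by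
    intro j hj
    rw [Finset.mem_range] at hj
    rw [← Finset.mul_sum, Rrep_rowsum m r j (by omega), mul_one]
  rw [Finset.sum_congr rfl h, Ptreat_rowsum m q i hi]

lemma Pimat_last (m : ℕ) (q r : ℝ) (i : ℕ) (hi : i ≤ m) :
    Pimat m q r i m = q ^ (m - i) := by
  unfold Pimat
  rw [Finset.sum_eq_single m]
  · unfold Ptreat Rrep
    rw [if_pos hi, if_pos rfl, if_pos rfl, Nat.choose_self, Nat.sub_self]
    norm_num
  · intro k hk hkm
    rw [Finset.mem_range] at hk
    unfold Rrep
    rw [if_neg hkm, if_neg (by omega), mul_zero]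
  · intro hmem; exact absurd (Finset.self_mem_range_succ m) hmem

lemma Amat_colsum (m : ℕ) (q r μ : ℝ) (t : Fin m) :
    ∑ k, Amat m q r μ k t =
      if (t : ℕ) = 0 then μ * (1 - q) ^ m - q ^ m
      else -(q ^ (m - (t : ℕ))) := by
  have ht : (t : ℕ) ≤ m := le_of_lt t.isLt
  have hsum : ∑ k : Fin m, Pimat m q r (t : ℕ) (k : ℕ) = 1 - q ^ (m - (t : ℕ)) := by
    rw [Fin.sum_univ_eq_sum_range (fun k => Pimat m q r (t : ℕ) k) m]
    have := Pimat_rowsum m q r (t : ℕ) ht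
    rw [Finset.sum_range_succ, Pimat_last m q r (t : ℕ) ht] at this
    linarith
  rw [← Finset.add_sum_erase _ _ (Finset.mem_univ t)]
  have herase : ∑ k ∈ Finset.univ.erase t, Amat m q r μ k t
      = (1 - q ^ (m - (t : ℕ))) - Pimat m q r (t : ℕ) (t : ℕ) := by
    have h1 : ∀ k ∈ Finset.univ.erase t, Amat m q r μ k t
        = Pimat m q r (t : ℕ) (k : ℕ) := by
      intro k hk
      have : k ≠ t := Finset.ne_of_mem_erase hk
      unfold Amat
      rw [if_neg this]
    rw [Finset.sum_congr rfl h1, Finset.sum_erase_eq_sub (Finset.mem_univ t), hsum]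
  rw [herase]
  unfold Amat
  rw [if_pos rfl]
  by_cases h0 : (t : ℕ) = 0
  · rw [if_pos h0, if_pos h0, h0]
    simp
    ring
  · rw [if_neg h0, if_neg h0]
    ring

/-- for `q > 1/2` every eigenvalue of the system matrix `A`
has strictly negative real part. -/
theorem system_matrix_hurwitz (m : ℕ) (hm : 2 ≤ m) (q r μ : ℝ)
    (hq : 1 / 2 < q) (hq1 : q < 1) (hr0 : 0 < r) (hr1 : r < 1)
    (hμ0 : 0 < μ) (hμ1 : μ ≤ 1) :
    ∀ z : ℂ, (∃ v : Fin m → ℂ, v ≠ 0 ∧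
        ((Amat m q r μ).map (fun x => (x : ℂ))).mulVec v = z • v) →
      z.re < 0 := by
  intro z ⟨v, hv, hAv⟩
  set A := Amat m q r μ with hA
  set M := A.map (fun x => (x : ℂ)) with hM
  have hq0 : (0:ℝ) ≤ q := by linarith
  have hq1' : q ≤ 1 := le_of_lt hq1
  -- det (M - z • 1) = 0
  have hdet : (M - z • 1).det = 0 := by
    rw [← Matrix.exists_mulVec_eq_zero_iff]
    refine ⟨v, hv, ?_⟩
    rw [Matrix.sub_mulVec, Matrix.smul_mulVec, Matrix.one_mulVec, hAv, sub_self]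
  -- transpose
  have hdetT : (Mᵀ - z • 1).det = 0 := by
    have : Mᵀ - z • 1 = (M - z • 1)ᵀ := by
      rw [Matrix.transpose_sub, Matrix.transpose_smul, Matrix.transpose_one]
    rw [this, Matrix.det_transpose]
    exact hdet
  obtain ⟨w, hw, hweq⟩ := (Matrix.exists_mulVec_eq_zero_iff).mpr hdetT
  have hweq' : Mᵀ.mulVec w = z • w := by
    have := hweq
    rw [Matrix.sub_mulVec, Matrix.smul_mulVec, Matrix.one_mulVec, sub_eq_zero] at this
    exact this
  -- pick maximizing index
  obtain ⟨s, hs⟩ := Function.ne_iff.mp hw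
  obtain ⟨t, -, htmax⟩ := Finset.exists_max_image Finset.univ
    (fun k => ‖w k‖) ⟨s, Finset.mem_univ s⟩
  have hwt : 0 < ‖w t‖ :=
    lt_of_lt_of_le (by simpa using hs) (htmax s (Finset.mem_univ s))
  -- row equation at t
  have hrow : ∑ k, (A k t : ℂ) * w k = z * w t := by
    have := congrFun hweq' t
    simpa [Matrix.mulVec, dotProduct, Matrix.transpose_apply, hM, Matrix.map_apply,
      Pi.smul_apply, smul_eq_mul] using this
  have hsplit : (z - (A t t : ℂ)) * w t = ∑ k ∈ Finset.univ.erase t, (A k t : ℂ) * w k := by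
    rw [← Finset.add_sum_erase _ _ (Finset.mem_univ t)] at hrow
    have : ∑ k ∈ Finset.univ.erase t, (A k t : ℂ) * w k
        = z * w t - (A t t : ℂ) * w t := by linear_combination hrow
    rw [this]; ring
  -- off-diagonal nonneg
  have hoff : ∀ k ∈ Finset.univ.erase t, 0 ≤ A k t := by
    intro k hk
    have hkt : k ≠ t := Finset.ne_of_mem_erase hk
    rw [hA]
    unfold Amat
    rw [if_neg hkt]
    exact Pimat_nonneg m q r hq0 hq1' (le_of_lt hr0) (le_of_lt hr1) _ _
  -- abs bound
  set S : ℝ := ∑ k ∈ Finset.univ.erase t, A k t with hS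
  have habs : ‖z - (A t t : ℂ)‖ * ‖w t‖ ≤ S * ‖w t‖ := by
    rw [← norm_mul, hsplit]
    calc ‖∑ k ∈ Finset.univ.erase t, (A k t : ℂ) * w k‖
        ≤ ∑ k ∈ Finset.univ.erase t, ‖(A k t : ℂ) * w k‖ :=
          norm_sum_le _ _
      _ ≤ ∑ k ∈ Finset.univ.erase t, A k t * ‖w t‖ := by
          apply Finset.sum_le_sum
          intro k hk
          rw [norm_mul, Complex.norm_real, Real.norm_eq_abs, abs_of_nonneg (hoff k hk)]
          exact mul_le_mul_of_nonneg_left (htmax k (Finset.mem_univ k)) (hoff k hk)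
      _ = S * ‖w t‖ := by rw [hS, Finset.sum_mul]
  have habs' : ‖z - (A t t : ℂ)‖ ≤ S :=
    le_of_mul_le_mul_right habs hwt
  have hre : z.re ≤ A t t + S := by
    have h1 : z.re - A t t ≤ ‖z - (A t t : ℂ)‖ := by
      have := Complex.re_le_norm (z - (A t t : ℂ))
      simpa using this
    linarith
  -- column sum negative
  have hcol : A t t + S = ∑ k, A k t := by
    rw [hS, ← Finset.add_sum_erase _ _ (Finset.mem_univ t)]
  have hneg : (∑ k, A k t) < 0 := by
    rw [hA, Amat_colsum]
    by_cases h0 : (t : ℕ) = 0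
    · rw [if_pos h0]
      have h1 : (1 - q) < q := by linarith
      have h2 : (0:ℝ) ≤ 1 - q := by linarith
      have h3 : (1 - q) ^ m < q ^ m :=
        pow_lt_pow_left₀ h1 h2 (by omega)
      have h4 : μ * (1 - q) ^ m ≤ (1 - q) ^ m := by
        nlinarith [pow_nonneg h2 m]
      linarith
    · rw [if_neg h0]
      have : 0 < q ^ (m - (t : ℕ)) := pow_pos (by linarith) _
      linarith
  linarith [hcol ▸ hneg]
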